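/- Let X = ℝ \ {0}, and define x ≼ y iff |x| ≤ |y| and sgn(x) ≤ sgn(y), where sgn(x) = 1 if x > 0 and sgn(x) = −1 if x < 0. Then ≼ is a partial order on X, the pair of functions (|·|, sgn) is a multi-utility for (X,≼) of cardinality 2, and (X,≼) has no finite Debreu separable realizer: for every natural number N and every family (≼ᵢ)ᵢ₌₁,…,N of Debreu separable linear extensions of ≼, there exist x, y ∈ X with ¬(x ≼ y) but x ≼ᵢ y for all i = 1,…,N. -/
import Mathlib


/-- A binary relation is a partial order: reflexive, antisymmetric, transitive. -/
def IsPartialOrderRel {X : Type*} (r : X → X → Prop) : Prop :=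
  (∀ x, r x x) ∧ (∀ x y, r x y → r y x → x = y) ∧ (∀ x y z, r x y → r y z → r x z)

/-- `r'` extends `r`. -/
def RelExtends {X : Type*} (r r' : X → X → Prop) : Prop :=
  ∀ x y, r x y → r' x y

/-- `r` is total: any two elements are comparable. -/
def TotalRel {X : Type*} (r : X → X → Prop) : Prop :=
  ∀ x y, r x y ∨ r y x

/-- `r'` is a linear extension of `r`: a total partial order extending `r`. -/
def IsLinearExtension {X : Type*} (r r' : X → X → Prop) : Prop :=
  IsPartialOrderRel r' ∧ TotalRel r' ∧ RelExtends r r'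

/-- `x` and `y` are incomparable with respect to `r`. -/
def Incomp {X : Type*} (r : X → X → Prop) (x y : X) : Prop :=
  ¬ r x y ∧ ¬ r y x

/-- `D` is Debreu dense for `r`. -/
def DebreuDense {X : Type*} (r : X → X → Prop) (D : Set X) : Prop :=
  ∀ x y, r x y → ¬ r y x → ∃ d ∈ D, r x d ∧ r d y

/-- `(X, r)` is Debreu separable: it has a countable Debreu dense subset. -/
def DebreuSeparable {X : Type*} (r : X → X → Prop) : Prop :=
  ∃ D : Set X, D.Countable ∧ DebreuDense r D

/-- The limit of a sequence of binary relations. -/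
def LimitRel {X : Type*} (r : ℕ → X → X → Prop) : X → X → Prop :=
  fun x y => ∃ n₀ : ℕ, ∀ n, n₀ ≤ n → r n x y

/-- The ground set `ℝ \ {0}`. -/
abbrev NzReal : Type := {x : ℝ // x ≠ 0}

/-- Absolute value on `ℝ \ {0}`. -/
def absFn : NzReal → ℝ := fun x => |x.1|

/-- Sign function: `1` on positives, `-1` on negatives. -/
noncomputable def sgnFn : NzReal → ℝ := fun x => if 0 < x.1 then 1 else -1

/-- The partial order of Theorem 4: `x ≼ y` iff `|x| ≤ |y|` and `sgn x ≤ sgn y`. -/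
noncomputable def rGeo : NzReal → NzReal → Prop := fun x y =>
  absFn x ≤ absFn y ∧ sgnFn x ≤ sgnFn y

theorem rGeo_multiUtility_two_no_finite_debreuSeparableRealizer :
    IsPartialOrderRel rGeo ∧
    (∀ x y, rGeo x y ↔ (absFn x ≤ absFn y ∧ sgnFn x ≤ sgnFn y)) ∧
    (∀ (N : ℕ) (R : Fin N → NzReal → NzReal → Prop),
      (∀ i, IsLinearExtension rGeo (R i) ∧ DebreuSeparable (R i)) →
      ∃ x y, ¬ rGeo x y ∧ ∀ i, R i x y) := by
  have hPO : IsPartialOrderRel rGeo := by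
    refine ⟨fun x => ⟨le_refl _, le_refl _⟩, ?_, fun x y z hxy hyz =>
      ⟨hxy.1.trans hyz.1, hxy.2.trans hyz.2⟩⟩
    intro x y hxy hyx
    have habs : |x.1| = |y.1| := le_antisymm hxy.1 hyx.1
    have hsgn : sgnFn x = sgnFn y := le_antisymm hxy.2 hyx.2
    apply Subtype.ext
    rcases x.2.lt_or_gt with hx | hx <;> rcases y.2.lt_or_gt with hy | hy
    · rw [abs_of_neg hx, abs_of_neg hy] at habs; linarith
    · simp only [sgnFn, if_neg (not_lt.2 hx.le), if_pos hy] at hsgn; norm_num at hsgn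
    · simp only [sgnFn, if_pos hx, if_neg (not_lt.2 hy.le)] at hsgn; norm_num at hsgn
    · rwa [abs_of_pos hx, abs_of_pos hy] at habs
  refine ⟨hPO, fun x y => Iff.rfl, ?_⟩
  intro N R hR
  choose D hDc hDd using fun i => (hR i).2
  -- for each positive real t, the element -t is strictly below t in each R i
  have hstep : ∀ t : {t : ℝ // 0 < t}, ∀ i : Fin N,
      ∃ d ∈ D i, R i ⟨-t.1, by simp [t.2.ne']⟩ d ∧ R i d ⟨t.1, t.2.ne'⟩ := by
    intro t i
    set a : NzReal := ⟨-t.1, by simp [t.2.ne']⟩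
    set b : NzReal := ⟨t.1, t.2.ne'⟩
    have h1 : rGeo a b := by
      constructor
      · simp [absFn, a, b, abs_neg]
      · simp only [sgnFn, a, b]
        rw [if_neg (by simpa using not_lt.2 t.2.le), if_pos t.2]
        norm_num
    have h2 : R i a b := (hR i).1.2.2 _ _ h1
    have h3 : ¬ R i b a := by
      intro h
      have hab : a = b := (hR i).1.1.2.1 _ _ h2 h
      have : -t.1 = t.1 := congrArg Subtype.val hab
      linarith [t.2]
    exact hDd i _ _ h2 h3
  choose f hfD hf1 hf2 using hstep
  -- f maps an uncountable set into a countable set, hence is not injective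
  have hScount : { g : Fin N → NzReal | ∀ i, g i ∈ D i }.Countable :=
    Set.countable_pi hDc
  have hnotinj : ¬ Function.Injective f := by
    intro hinj
    have hpre : (f ⁻¹' { g : Fin N → NzReal | ∀ i, g i ∈ D i }).Countable :=
      hScount.preimage hinj
    have huniv : (f ⁻¹' { g : Fin N → NzReal | ∀ i, g i ∈ D i }) = Set.univ := by
      ext t; simpa using fun i => hfD t i
    rw [huniv, Set.countable_univ_iff] at hpre
    have : Countable ℝ := by
      have hexp : Function.Injective (fun r : ℝ => (⟨Real.exp r, Real.exp_pos r⟩ : {t : ℝ // 0 < t})) := by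
        intro a b hab
        exact Real.exp_injective (congrArg Subtype.val hab)
      exact Countable.of_equiv _ (Equiv.ofInjective _ hexp).symm
    exact not_countable this
  rw [Function.not_injective_iff] at hnotinj
  obtain ⟨t, t', hft, hne⟩ := hnotinj
  -- WLOG t.1 < t'.1; produce the incomparable pair (-max, min)
  have key : ∀ s u : {t : ℝ // 0 < t}, s.1 < u.1 → f s = f u →
      ∃ x y, ¬ rGeo x y ∧ ∀ i, R i x y := by
    intro s u hsu hfsu
    refine ⟨⟨-u.1, by simp [u.2.ne']⟩, ⟨s.1, s.2.ne'⟩, ?_, ?_⟩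
    · intro hcon
      have : |(-u.1 : ℝ)| ≤ |s.1| := hcon.1
      rw [abs_neg, abs_of_pos u.2, abs_of_pos s.2] at this
      linarith
    · intro i
      have h1 : R i ⟨-u.1, by simp [u.2.ne']⟩ (f u i) := hf1 u i
      have h2 : R i (f u i) ⟨s.1, s.2.ne'⟩ := by
        rw [← hfsu]; exact hf2 s i
      exact (hR i).1.1.2.2 _ _ _ h1 h2
  have hne' : t.1 ≠ t'.1 := fun h => hne (Subtype.ext h)
  rcases hne'.lt_or_gt with h | h
  · exact key t t' h hft
  · exact key t' t h hft.symm
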